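/- (Kolmogorov's theorem.) Let P be an irreducible Markov matrix on a finite set V (i.e., for all v,w there is n ≥ 1 with P^n(v,w) > 0). Then there exists a strictly positive function κ : V → ℝ_{>0} with κ(v)P(v,w) = κ(w)P(w,v) for all v,w ∈ V if and only if for every closed path ω = v₀v₁⋯v_n v₀ one has P(v₀,v₁)P(v₁,v₂)⋯P(v_n,v₀) = P(v₀,v_n)P(v_n,v_{n-1})⋯P(v₁,v₀). -/
import Mathlib

lemma kg_pow_nonneg {V : Type*} [Fintype V] [DecidableEq V] (P : Matrix V V ℝ)
    (hP0 : ∀ v w, 0 ≤ P v w) : ∀ (n : ℕ) (v w : V), 0 ≤ (P ^ n) v w := by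
  intro n
  induction n with
  | zero => intro v w; simp [Matrix.one_apply]; split <;> norm_num
  | succ n ih =>
    intro v w
    rw [pow_succ', Matrix.mul_apply]
    exact Finset.sum_nonneg fun z _ => mul_nonneg (hP0 v z) (ih z w)

lemma kg_path {V : Type*} [Fintype V] [DecidableEq V] (P : Matrix V V ℝ)
    (hP0 : ∀ v w, 0 ≤ P v w) :
    ∀ (n : ℕ) (v w : V), 0 < (P ^ n) v w →
      ∃ u : ℕ → V, u 0 = v ∧ u n = w ∧ ∀ i < n, 0 < P (u i) (u (i + 1)) := by
  intro n
  induction n with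
  | zero =>
    intro v w h
    rw [pow_zero, Matrix.one_apply] at h
    refine ⟨fun _ => v, rfl, ?_, fun i hi => absurd hi (by omega)⟩
    by_contra hvw
    simp [if_neg hvw] at h
  | succ n ih =>
    intro v w h
    rw [pow_succ', Matrix.mul_apply] at h
    have hex : ∃ z ∈ Finset.univ, 0 < P v z * (P ^ n) z w := by
      by_contra hc
      push_neg at hc
      have : ∑ z, P v z * (P ^ n) z w ≤ 0 :=
        Finset.sum_nonpos fun z hz => hc z hz
      linarith
    obtain ⟨z, -, hz⟩ := hex
    have hvz : 0 < P v z := by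
      rcases (hP0 v z).lt_or_eq with h' | h'
      · exact h'
      · rw [← h'] at hz; simp at hz
    have hzw : 0 < (P ^ n) z w := by
      rcases (kg_pow_nonneg P hP0 n z w).lt_or_eq with h' | h'
      · exact h'
      · rw [← h'] at hz; simp at hz
    obtain ⟨u', h0, hn, hstep⟩ := ih z w hzw
    refine ⟨fun i => match i with | 0 => v | (j+1) => u' j, rfl, hn, ?_⟩
    intro i hi
    match i with
    | 0 => simpa [h0] using hvz
    | (j+1) => exact hstep j (by omega)

/-- Kolmogorov's theorem: an irreducible Markov matrix admits a strictly positive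
`κ` satisfying detailed balance iff the product of transition probabilities along every closed
path equals the product along the reversed closed path. -/
theorem stmt_7 {V : Type*} [Fintype V] [DecidableEq V]
    (P : Matrix V V ℝ) (hP0 : ∀ v w, 0 ≤ P v w) (hP1 : ∀ v, (∑ w, P v w) = 1)
    (hirr : ∀ v w, ∃ n : ℕ, 1 ≤ n ∧ 0 < (P ^ n) v w) :
    (∃ κ : V → ℝ, (∀ v, 0 < κ v) ∧ ∀ v w, κ v * P v w = κ w * P w v) ↔
    (∀ (n : ℕ) (ω : Fin (n + 1) → V),
      (∏ i, P (ω i) (ω (i + 1))) = ∏ i, P (ω (i + 1)) (ω i)) := by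
  constructor
  · rintro ⟨κ, hpos, hdb⟩ n ω
    have h2 : (∏ i, κ (ω i)) * ∏ i, P (ω i) (ω (i + 1))
        = (∏ i, κ (ω (i + 1))) * ∏ i, P (ω (i + 1)) (ω i) := by
      rw [← Finset.prod_mul_distrib, ← Finset.prod_mul_distrib]
      exact Finset.prod_congr rfl fun i _ => hdb (ω i) (ω (i + 1))
    have h3 : ∏ i, κ (ω (i + 1)) = ∏ i, κ (ω i) :=
      Fintype.prod_equiv (Equiv.addRight (1 : Fin (n+1)))
        (fun i => κ (ω (i + 1))) (fun i => κ (ω i)) (fun i => rfl)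
    rw [h3] at h2
    have hκ : (0:ℝ) < ∏ i, κ (ω i) := Finset.prod_pos fun i _ => hpos _
    exact mul_left_cancel₀ (ne_of_gt hκ) h2
  · intro hcyc
    rcases isEmpty_or_nonempty V with hV | hV
    · exact ⟨fun _ => 1, fun v => isEmptyElim v, fun v w => isEmptyElim v⟩
    -- cycle condition in ℕ-indexed form
    have hcyc' : ∀ (m : ℕ) (c : ℕ → V), c (m + 1) = c 0 →
        ∏ i ∈ Finset.range (m + 1), P (c i) (c (i + 1))
          = ∏ i ∈ Finset.range (m + 1), P (c (i + 1)) (c i) := by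
      intro m c hc
      have key : ∀ i : Fin (m + 1), c ((i : ℕ) + 1) = c ((i + 1 : Fin (m + 1)) : ℕ) := by
        intro i
        rw [Fin.val_add_one]
        rcases eq_or_ne i (Fin.last m) with h | h
        · rw [if_pos h, h]; simpa using hc
        · rw [if_neg h]
      calc ∏ i ∈ Finset.range (m + 1), P (c i) (c (i + 1))
          = ∏ i : Fin (m + 1), P (c (i : ℕ)) (c ((i : ℕ) + 1)) :=
            (Fin.prod_univ_eq_prod_range _ _).symm
        _ = ∏ i : Fin (m + 1), P (c (i : ℕ)) (c ((i + 1 : Fin (m + 1)) : ℕ)) :=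
            Finset.prod_congr rfl fun i _ => by rw [key i]
        _ = ∏ i : Fin (m + 1), P (c ((i + 1 : Fin (m + 1)) : ℕ)) (c (i : ℕ)) :=
            hcyc m (fun i => c (i : ℕ))
        _ = ∏ i : Fin (m + 1), P (c ((i : ℕ) + 1)) (c (i : ℕ)) :=
            Finset.prod_congr rfl fun i _ => by rw [key i]
        _ = ∏ i ∈ Finset.range (m + 1), P (c (i + 1)) (c i) :=
            Fin.prod_univ_eq_prod_range (fun i => P (c (i + 1)) (c i)) (m + 1)
    -- symmetry of positivity
    have hsym : ∀ v w, 0 < P v w → 0 < P w v := by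
      intro v w hvw
      obtain ⟨n, hn1, hn⟩ := hirr w v
      obtain ⟨u, h0, hne, hstep⟩ := kg_path P hP0 n w v hn
      set c : ℕ → V := fun i => if i ≤ n then u i else w with hcdef
      have hc1 : ∀ i, i ≤ n → c i = u i := fun i hi => if_pos hi
      have hc2 : c (n + 1) = w := if_neg (by omega)
      have hcc : c (n + 1) = c 0 := by rw [hc2, hc1 0 (Nat.zero_le n), h0]
      have h1 : ∏ i ∈ Finset.range (n + 1), P (c i) (c (i + 1))
          = (∏ i ∈ Finset.range n, P (u i) (u (i + 1))) * P v w := by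
        rw [Finset.prod_range_succ]
        congr 1
        · exact Finset.prod_congr rfl fun i hi => by
            have := Finset.mem_range.mp hi
            rw [hc1 i (by omega), hc1 (i + 1) (by omega)]
        · rw [hc1 n le_rfl, hc2, hne]
      have h2 : ∏ i ∈ Finset.range (n + 1), P (c (i + 1)) (c i)
          = (∏ i ∈ Finset.range n, P (u (i + 1)) (u i)) * P w v := by
        rw [Finset.prod_range_succ]
        congr 1
        · exact Finset.prod_congr rfl fun i hi => by
            have := Finset.mem_range.mp hi
            rw [hc1 i (by omega), hc1 (i + 1) (by omega)]
        · rw [hc1 n le_rfl, hc2, hne]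
      have h3 := hcyc' n c hcc
      rw [h1, h2] at h3
      have hposf : 0 < (∏ i ∈ Finset.range n, P (u i) (u (i + 1))) * P v w :=
        mul_pos (Finset.prod_pos fun i hi => hstep i (Finset.mem_range.mp hi)) hvw
      rw [h3] at hposf
      rcases (hP0 w v).lt_or_eq with h | h
      · exact h
      · rw [← h, mul_zero] at hposf; exact absurd hposf (lt_irrefl 0)
    -- choose paths from a fixed base point
    obtain ⟨v₀⟩ := hV
    have hpaths : ∀ v : V, ∃ (m : ℕ) (u : ℕ → V),
        u 0 = v₀ ∧ u m = v ∧ ∀ i < m, 0 < P (u i) (u (i + 1)) := by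
      intro v
      obtain ⟨n, hn1, hn⟩ := hirr v₀ v
      obtain ⟨u, h0, hne, hstep⟩ := kg_path P hP0 n v₀ v hn
      exact ⟨n, u, h0, hne, hstep⟩
    choose N u hu0 huN hustep using hpaths
    have hFpos : ∀ v, 0 < ∏ i ∈ Finset.range (N v), P (u v i) (u v (i + 1)) :=
      fun v => Finset.prod_pos fun i hi => hustep v i (Finset.mem_range.mp hi)
    have hBpos : ∀ v, 0 < ∏ i ∈ Finset.range (N v), P (u v (i + 1)) (u v i) :=
      fun v => Finset.prod_pos fun i hi => hsym _ _ (hustep v i (Finset.mem_range.mp hi))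
    refine ⟨fun v => (∏ i ∈ Finset.range (N v), P (u v i) (u v (i + 1)))
        / (∏ i ∈ Finset.range (N v), P (u v (i + 1)) (u v i)),
      fun v => div_pos (hFpos v) (hBpos v), ?_⟩
    intro v w
    rcases (hP0 v w).lt_or_eq with hvw | hvw
    · -- main case : 0 < P v w
      set a := N v with ha
      set b := N w with hb
      set c : ℕ → V := fun i => if i ≤ a then u v i else u w (a + 1 + b - i) with hcdef
      have hc1 : ∀ i, i ≤ a → c i = u v i := fun i hi => if_pos hi
      have hc2 : ∀ j, j ≤ b → c (a + 1 + j) = u w (b - j) := by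
        intro j hj
        have h1 : ¬ (a + 1 + j ≤ a) := by omega
        simp only [hcdef, if_neg h1]
        congr 1
        omega
      have hcc : c (a + b + 1) = c 0 := by
        rw [show a + b + 1 = a + 1 + b by omega, hc2 b le_rfl, Nat.sub_self,
          hu0 w, hc1 0 (Nat.zero_le a), hu0 v]
      have hsplit : ∀ h : ℕ → ℝ, ∏ i ∈ Finset.range (a + b + 1), h i
          = (∏ i ∈ Finset.range a, h i) * ((∏ j ∈ Finset.range b, h (a + 1 + j)) * h a) := by
        intro h
        rw [show a + b + 1 = a + (b + 1) by omega, Finset.prod_range_add,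
          Finset.prod_range_succ']
        congr 1
        congr 1
        · exact Finset.prod_congr rfl fun j _ => by rw [show a + (j + 1) = a + 1 + j by omega]
      have hfwd : ∏ i ∈ Finset.range (a + b + 1), P (c i) (c (i + 1))
          = (∏ i ∈ Finset.range a, P (u v i) (u v (i + 1)))
            * ((∏ i ∈ Finset.range b, P (u w (i + 1)) (u w i)) * P v w) := by
        have p1 : ∏ i ∈ Finset.range a, P (c i) (c (i + 1))
            = ∏ i ∈ Finset.range a, P (u v i) (u v (i + 1)) :=
          Finset.prod_congr rfl fun i hi => by
            have := Finset.mem_range.mp hi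
            rw [hc1 i (by omega), hc1 (i + 1) (by omega)]
        have p2 : (∏ j ∈ Finset.range b, P (c (a + 1 + j)) (c (a + 1 + j + 1)))
            = ∏ i ∈ Finset.range b, P (u w (i + 1)) (u w i) := by
          calc ∏ j ∈ Finset.range b, P (c (a + 1 + j)) (c (a + 1 + j + 1))
              = ∏ j ∈ Finset.range b, P (u w ((b - 1 - j) + 1)) (u w (b - 1 - j)) := by
                refine Finset.prod_congr rfl fun j hj => ?_
                have hjb := Finset.mem_range.mp hj
                rw [show a + 1 + j + 1 = a + 1 + (j + 1) by omega, hc2 j (by omega),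
                  hc2 (j + 1) (by omega), show b - j = (b - 1 - j) + 1 by omega,
                  show b - (j + 1) = b - 1 - j by omega]
            _ = ∏ i ∈ Finset.range b, P (u w (i + 1)) (u w i) :=
                Finset.prod_range_reflect (fun i => P (u w (i + 1)) (u w i)) b
        have p3 : P (c a) (c (a + 1)) = P v w := by
          rw [hc1 a le_rfl, huN v, show a + 1 = a + 1 + 0 from rfl, hc2 0 (Nat.zero_le b),
            Nat.sub_zero, huN w]
        rw [hsplit, p1, p2, p3]
      have hbwd : ∏ i ∈ Finset.range (a + b + 1), P (c (i + 1)) (c i)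
          = (∏ i ∈ Finset.range a, P (u v (i + 1)) (u v i))
            * ((∏ i ∈ Finset.range b, P (u w i) (u w (i + 1))) * P w v) := by
        have p1 : ∏ i ∈ Finset.range a, P (c (i + 1)) (c i)
            = ∏ i ∈ Finset.range a, P (u v (i + 1)) (u v i) :=
          Finset.prod_congr rfl fun i hi => by
            have := Finset.mem_range.mp hi
            rw [hc1 i (by omega), hc1 (i + 1) (by omega)]
        have p2 : (∏ j ∈ Finset.range b, P (c (a + 1 + j + 1)) (c (a + 1 + j)))
            = ∏ i ∈ Finset.range b, P (u w i) (u w (i + 1)) := by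
          calc ∏ j ∈ Finset.range b, P (c (a + 1 + j + 1)) (c (a + 1 + j))
              = ∏ j ∈ Finset.range b, P (u w (b - 1 - j)) (u w ((b - 1 - j) + 1)) := by
                refine Finset.prod_congr rfl fun j hj => ?_
                have hjb := Finset.mem_range.mp hj
                rw [show a + 1 + j + 1 = a + 1 + (j + 1) by omega, hc2 j (by omega),
                  hc2 (j + 1) (by omega), show b - j = (b - 1 - j) + 1 by omega,
                  show b - (j + 1) = b - 1 - j by omega]
            _ = ∏ i ∈ Finset.range b, P (u w i) (u w (i + 1)) :=
                Finset.prod_range_reflect (fun i => P (u w i) (u w (i + 1))) b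
        have p3 : P (c (a + 1)) (c a) = P w v := by
          rw [hc1 a le_rfl, huN v, show a + 1 = a + 1 + 0 from rfl, hc2 0 (Nat.zero_le b),
            Nat.sub_zero, huN w]
        rw [hsplit, p1, p2, p3]
      have hEq := hcyc' (a + b) c hcc
      rw [hfwd, hbwd] at hEq
      rw [div_mul_eq_mul_div, div_mul_eq_mul_div,
        div_eq_div_iff (ne_of_gt (hBpos v)) (ne_of_gt (hBpos w))]
      linear_combination hEq
    · -- degenerate case : P v w = 0
      have hwv : P w v = 0 := by
        rcases (hP0 w v).lt_or_eq with h | h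
        · have := hsym w v h
          rw [← hvw] at this
          exact absurd this (lt_irrefl 0)
        · exact h.symm
      rw [← hvw, hwv, mul_zero, mul_zero]
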